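/- For every R₀ > 0, α₀ > 0, κ > 0 and A > 0, consider the Riccati-type ODE z' = α₀(R₀ - A·T² + κz²). If R₀ > (1/α₀)·√(A/κ), then there is no solution z: ℝ → ℝ defined for all T ∈ ℝ; equivalently, every maximal solution blows up to +∞ in finite time or escapes, when R₀·α₀·√(κ/A) > 1. -/

import Mathlib

theorem riccati_unsafe_overshoot_blowup (R₀ α₀ κ A : ℝ)
    (hR : 0 < R₀) (hα : 0 < α₀) (hκ : 0 < κ) (hA : 0 < A)
    (hcrit : R₀ > 1 / α₀ * Real.sqrt (A / κ)) :
    ¬∃ z : ℝ → ℝ, ∀ T : ℝ,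
      HasDerivAt z (α₀ * (R₀ - A * T ^ 2 + κ * (z T) ^ 2)) T := by
  rintro ⟨z, hz⟩
  have hzd : Differentiable ℝ z := fun T => (hz T).differentiableAt
  have hzc : Continuous z := hzd.continuous
  set β : ℝ := α₀ * Real.sqrt (κ * A) with hβdef
  have hβ2 : β ^ 2 = α₀ ^ 2 * κ * A := by
    rw [hβdef, mul_pow, Real.sq_sqrt (by positivity)]; ring
  have hβpos : 0 < β := by
    have : 0 < Real.sqrt (κ * A) := Real.sqrt_pos.mpr (by positivity)
    positivity
  set c : ℝ := α₀ ^ 2 * κ * R₀ - β with hcdef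
  have hc : 0 < c := by
    have h1 : Real.sqrt (κ * A) = κ * Real.sqrt (A / κ) := by
      rw [show κ * A = κ ^ 2 * (A / κ) by field_simp,
        Real.sqrt_mul (by positivity), Real.sqrt_sq hκ.le]
    have h2 : α₀ * R₀ > Real.sqrt (A / κ) := by
      calc Real.sqrt (A / κ) = α₀ * (1 / α₀ * Real.sqrt (A / κ)) := by
            rw [show α₀ * (1 / α₀ * Real.sqrt (A / κ)) = α₀ / α₀ * Real.sqrt (A / κ) by ring,
              div_self hα.ne', one_mul]
        _ < α₀ * R₀ := mul_lt_mul_of_pos_left hcrit hα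
    have h3 : α₀ * κ * Real.sqrt (A / κ) < α₀ * κ * (α₀ * R₀) :=
      mul_lt_mul_of_pos_left h2 (by positivity)
    have h4 : α₀ * κ * Real.sqrt (A / κ) = α₀ * Real.sqrt (κ * A) := by
      rw [h1]; ring
    rw [hcdef, hβdef]
    nlinarith
  set I : ℝ → ℝ := fun T => ∫ s in (0:ℝ)..T, z s with hIdef
  have hI : ∀ T, HasDerivAt I (z T) T := fun T =>
    intervalIntegral.integral_hasDerivAt_right
      (hzc.intervalIntegrable _ _)
      (hzc.stronglyMeasurableAtFilter _ _)
      hzc.continuousAt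
  set J : ℝ → ℝ := fun T => -β * T ^ 2 / 2 - α₀ * κ * I T with hJdef
  have hJ : ∀ T, HasDerivAt J (-β * T - α₀ * κ * z T) T := by
    intro T
    have h1 : HasDerivAt (fun T : ℝ => -β * T ^ 2 / 2) (-β * T) T := by
      have := ((hasDerivAt_pow 2 T).const_mul (-β)).div_const 2
      exact this.congr_deriv (by ring)
    exact h1.sub ((hI T).const_mul (α₀ * κ))
  set W : ℝ → ℝ := fun T => (β * T - α₀ * κ * z T) * Real.exp (J T) with hWdef
  have hW : ∀ T, HasDerivAt W (-c * Real.exp (J T)) T := by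
    intro T
    have h1 : HasDerivAt (fun T : ℝ => β * T - α₀ * κ * z T)
        (β * 1 - α₀ * κ * (α₀ * (R₀ - A * T ^ 2 + κ * (z T) ^ 2))) T :=
      ((hasDerivAt_id T).const_mul β).sub ((hz T).const_mul (α₀ * κ))
    have := h1.mul (hJ T).exp
    refine this.congr_deriv (Eq.symm ?_)
    rw [hcdef]
    linear_combination (Real.exp (J T) * T ^ 2) * hβ2
  set ψ : ℝ → ℝ := fun T => Real.exp (J T + β * T ^ 2) with hψdef
  have hψpos : ∀ T, 0 < ψ T := fun T => Real.exp_pos _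
  have hψ : ∀ T, HasDerivAt ψ (W T * Real.exp (β * T ^ 2)) T := by
    intro T
    have h2 : HasDerivAt (fun T : ℝ => β * T ^ 2) (β * (2 * T)) T := by
      have := (hasDerivAt_pow 2 T).const_mul β
      exact this.congr_deriv (by ring)
    have h1 : HasDerivAt (fun T : ℝ => J T + β * T ^ 2)
        ((-β * T - α₀ * κ * z T) + β * (2 * T)) T := (hJ T).add h2
    have := h1.exp
    convert this using 1
    rw [hWdef]
    simp only [Real.exp_add]
    ring
  have hψc : Continuous ψ := (Differentiable.continuous fun T => (hψ T).differentiableAt)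
  have hexp1 : ∀ T : ℝ, 1 ≤ Real.exp (β * T ^ 2) := fun T =>
    Real.one_le_exp (by positivity)
  have hWanti : StrictAnti W := by
    apply strictAnti_of_hasDerivAt_neg hW
    intro T
    have := Real.exp_pos (J T)
    nlinarith
  rcases lt_or_ge (W 0) 0 with hW0 | hW0
  · have hm : W 1 < 0 := lt_trans (hWanti one_pos) hW0
    set m : ℝ := -(W 1) with hmdef
    have hmpos : 0 < m := by rw [hmdef]; linarith
    have key : AntitoneOn (fun T => ψ T + m * T) (Set.Ici (1:ℝ)) := by
      apply antitoneOn_of_hasDerivWithinAt_nonpos (convex_Ici 1)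
        (f' := fun T => W T * Real.exp (β * T ^ 2) + m)
      · exact (hψc.add (continuous_const.mul continuous_id)).continuousOn
      · intro x _
        have := ((hψ x).add ((hasDerivAt_id x).const_mul m)).hasDerivWithinAt
          (s := interior (Set.Ici (1:ℝ)))
        exact this.congr_deriv (by ring)
      · intro x hx
        rw [interior_Ici] at hx
        have hWx : W x < W 1 := hWanti hx
        have h1 : W x * Real.exp (β * x ^ 2) ≤ W x := by
          nlinarith [hexp1 x, Real.exp_pos (β * x ^ 2)]
        rw [hmdef]; linarith
    set T₁ : ℝ := (ψ 1 + 2 * m) / m with hT₁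
    have hT₁ge : (1:ℝ) ≤ T₁ := by
      rw [hT₁, le_div_iff₀ hmpos]
      linarith [hψpos 1]
    have hkey := key (Set.self_mem_Ici) (Set.mem_Ici.mpr hT₁ge) hT₁ge
    have hmT₁ : m * T₁ = ψ 1 + 2 * m := by
      rw [hT₁]; field_simp
    simp only at hkey
    linarith [hψpos T₁, hmT₁]
  · have hm : 0 < W (-1) := lt_of_le_of_lt hW0 (hWanti (by norm_num))
    set m : ℝ := W (-1) with hmdef
    have key : MonotoneOn (fun T => ψ T - m * T) (Set.Iic (-1:ℝ)) := by
      apply monotoneOn_of_hasDerivWithinAt_nonneg (convex_Iic (-1))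
        (f' := fun T => W T * Real.exp (β * T ^ 2) - m)
      · exact (hψc.sub (continuous_const.mul continuous_id)).continuousOn
      · intro x _
        have := ((hψ x).sub ((hasDerivAt_id x).const_mul m)).hasDerivWithinAt
          (s := interior (Set.Iic (-1:ℝ)))
        exact this.congr_deriv (by ring)
      · intro x hx
        rw [interior_Iic] at hx
        have hWx : m < W x := hWanti hx
        have h1 : W x ≤ W x * Real.exp (β * x ^ 2) := by
          nlinarith [hexp1 x, Real.exp_pos (β * x ^ 2)]
        linarith
    have hmpos : 0 < m := hm
    set T₁ : ℝ := -((ψ (-1) + 2 * m) / m) with hT₁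
    have hT₁le : T₁ ≤ (-1:ℝ) := by
      rw [hT₁, neg_le, neg_neg, le_div_iff₀ hmpos]
      linarith [hψpos (-1)]
    have hkey := key (Set.mem_Iic.mpr hT₁le) (Set.self_mem_Iic) hT₁le
    have hmT₁ : m * T₁ = -(ψ (-1) + 2 * m) := by
      rw [hT₁]; field_simp
    simp only at hkey
    linarith [hψpos T₁, hmT₁]
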